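/- Let N be a positive integer, U ⊆ ℂ an open set, and w_1, …, w_N : U → ℂ holomorphic functions such that the values z_j(τ) := exp(i w_j(τ)) are pairwise distinct for each τ ∈ U and satisfy the system (1/z_j(τ)) z_j'(τ) = (1/(2N)) [ 1 + ∑_{k ≠ j} (z_j(τ) + z_k(τ)) / (z_j(τ) − z_k(τ)) ] for all j and all τ ∈ U. Then for every j and every τ ∈ U, w_j''(τ) = −(1/(4N²)) ∑_{k ≠ j} cos((w_j(τ) − w_k(τ))/2) / sin³((w_j(τ) − w_k(τ))/2), where cos and sin denote the complex cosine and sine. (These are the equations of motion of the trigonometric Calogero–Moser system.) -/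

import Mathlib

open Finset Complex

/- ### Exponential half-angle factorizations -/

lemma exp_sub_exp' (a b : ℂ) :
    Complex.exp (Complex.I * a) - Complex.exp (Complex.I * b)
      = Complex.exp (Complex.I * (a + b) / 2) * (2 * Complex.I * Complex.sin ((a - b) / 2)) := by
  rw [Complex.sin,
      show Complex.I * a = Complex.I * (a+b)/2 + ((a-b)/2 * Complex.I) by ring,
      show Complex.I * b = Complex.I * (a+b)/2 + (-((a-b)/2) * Complex.I) by ring,
      Complex.exp_add, Complex.exp_add]
  ring_nf
  simp only [Complex.I_sq]
  ring

lemma exp_add_exp' (a b : ℂ) :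
    Complex.exp (Complex.I * a) + Complex.exp (Complex.I * b)
      = Complex.exp (Complex.I * (a + b) / 2) * (2 * Complex.cos ((a - b) / 2)) := by
  rw [Complex.cos,
      show Complex.I * a = Complex.I * (a+b)/2 + ((a-b)/2 * Complex.I) by ring,
      show Complex.I * b = Complex.I * (a+b)/2 + (-((a-b)/2) * Complex.I) by ring,
      Complex.exp_add, Complex.exp_add]
  ring

lemma sin_half_ne (x y : ℂ) (h : Complex.exp (Complex.I * x) ≠ Complex.exp (Complex.I * y)) :
    Complex.sin ((x - y)/2) ≠ 0 := by
  intro h0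
  exact h (sub_eq_zero.mp (by rw [exp_sub_exp' x y, h0]; ring))

lemma exp_ratio (x y : ℂ) (h : Complex.exp (Complex.I * x) ≠ Complex.exp (Complex.I * y)) :
    (Complex.exp (Complex.I * x) + Complex.exp (Complex.I * y)) /
      (Complex.exp (Complex.I * x) - Complex.exp (Complex.I * y))
      = -Complex.I * (Complex.cos ((x - y)/2) / Complex.sin ((x - y)/2)) := by
  have hs := sin_half_ne x y h
  have hE : Complex.exp (Complex.I * (x + y) / 2) ≠ 0 := Complex.exp_ne_zero _
  rw [exp_add_exp', exp_sub_exp']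
  field_simp
  ring_nf
  simp only [Complex.I_sq]
  ring

/- ### The trigonometric three-point identity -/

lemma trig_id (a c : ℂ) (ha : Complex.sin a ≠ 0) (hc : Complex.sin c ≠ 0)
    (hac : Complex.sin (a+c) ≠ 0) :
    (Complex.cos (a+c)/Complex.sin (a+c) - Complex.cos c/Complex.sin c)/Complex.sin a^2
      + (Complex.cos a/Complex.sin a + Complex.cos c/Complex.sin c)/Complex.sin (a+c)^2 = 0 := by
  have hnum : Complex.cos (a+c) * Complex.sin c - Complex.sin (a+c) * Complex.cos c
      = -Complex.sin a := by
    have h := Complex.sin_sub c (a+c)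
    rw [show c - (a+c) = -a by ring, Complex.sin_neg] at h
    linear_combination -h
  have e1 : Complex.cos (a+c)/Complex.sin (a+c) - Complex.cos c/Complex.sin c
      = -Complex.sin a/(Complex.sin (a+c)*Complex.sin c) := by
    rw [div_sub_div _ _ hac hc, hnum]
  have e2 : Complex.cos a/Complex.sin a + Complex.cos c/Complex.sin c
      = Complex.sin (a+c)/(Complex.sin a*Complex.sin c) := by
    rw [div_add_div _ _ ha hc, Complex.sin_add]; ring_nf
  rw [e1, e2]
  field_simp
  ring

/- ### Abstract antisymmetric double-sum vanishing -/

lemma sum_antisym_zero {N : ℕ} (E : Finset (Fin N)) (f : Fin N → Fin N → ℂ)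
    (hf : ∀ k ∈ E, ∀ m ∈ E.erase k, f k m + f m k = 0) :
    ∑ k ∈ E, ∑ m ∈ E.erase k, f k m = 0 := by
  have hswap : ∑ k ∈ E, ∑ m ∈ E.erase k, f k m = ∑ k ∈ E, ∑ m ∈ E.erase k, f m k :=
    Finset.sum_comm' (by intro x y; simp only [mem_erase]; tauto)
  have h2 : (∑ k ∈ E, ∑ m ∈ E.erase k, f k m) + (∑ k ∈ E, ∑ m ∈ E.erase k, f k m) = 0 := by
    nth_rewrite 2 [hswap]
    rw [← Finset.sum_add_distrib]
    refine Finset.sum_eq_zero fun k hk => ?_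
    rw [← Finset.sum_add_distrib]
    exact Finset.sum_eq_zero fun m hm => hf k hk m hm
  exact add_self_eq_zero.mp h2

/- ### The right-hand side function -/

noncomputable def snf {N : ℕ} (a : Fin N → ℂ) (k l : Fin N) : ℂ :=
  Complex.sin ((a k - a l)/2)

noncomputable def ctf {N : ℕ} (a : Fin N → ℂ) (k l : Fin N) : ℂ :=
  Complex.cos ((a k - a l)/2) / snf a k l

noncomputable def Ga {N : ℕ} (a : Fin N → ℂ) (k : Fin N) : ℂ :=
  (1/(2*(N:ℂ))) * (-Complex.I - ∑ m ∈ Finset.univ.erase k, ctf a k m)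

lemma ctf_anti {N : ℕ} (a : Fin N → ℂ) (k l : Fin N) : ctf a l k = -ctf a k l := by
  simp only [ctf, snf]
  rw [show (a l - a k)/2 = -((a k - a l)/2) by ring, Complex.cos_neg, Complex.sin_neg, div_neg]

/- ### Key algebraic identity (Calogero–Moser) -/

lemma key_alg (N : ℕ) (hN : 0 < N) (a : Fin N → ℂ)
    (hs : ∀ k l : Fin N, k ≠ l → Complex.sin ((a k - a l)/2) ≠ 0) (j : Fin N) :
    (1/(2*(N:ℂ))) * ∑ k ∈ Finset.univ.erase j,
        ((Ga a j - Ga a k)/2) / (snf a j k)^2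
      = -(1/(4*(N:ℂ)^2)) * ∑ k ∈ Finset.univ.erase j,
          Complex.cos ((a j - a k)/2) / (snf a j k)^3 := by
  have hNz : (N:ℂ) ≠ 0 := Nat.cast_ne_zero.mpr hN.ne'
  have step1 : ∀ k ∈ Finset.univ.erase j, Ga a j - Ga a k
      = (1/(2*(N:ℂ))) * (-2 * ctf a j k
          - ∑ m ∈ (Finset.univ.erase j).erase k, (ctf a j m - ctf a k m)) := by
    intro k hk
    have hkj : k ≠ j := (Finset.mem_erase.mp hk).1
    have hjk : j ∈ Finset.univ.erase k := Finset.mem_erase.mpr ⟨hkj.symm, Finset.mem_univ j⟩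
    have hSj : (∑ m ∈ (Finset.univ.erase j).erase k, ctf a j m) + ctf a j k
        = ∑ m ∈ Finset.univ.erase j, ctf a j m := Finset.sum_erase_add _ _ hk
    have hSk : (∑ m ∈ (Finset.univ.erase k).erase j, ctf a k m) + ctf a k j
        = ∑ m ∈ Finset.univ.erase k, ctf a k m := Finset.sum_erase_add _ _ hjk
    rw [Finset.erase_right_comm] at hSk
    unfold Ga
    rw [← hSj, ← hSk, ctf_anti a j k, Finset.sum_sub_distrib]
    ring
  have hzero : ∑ k ∈ Finset.univ.erase j, ∑ m ∈ (Finset.univ.erase j).erase k,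
      (ctf a j m - ctf a k m)/(snf a j k)^2 = 0 := by
    apply sum_antisym_zero
    intro k hk m hm
    obtain ⟨hmk, hm'⟩ := Finset.mem_erase.mp hm
    have hmj : m ≠ j := (Finset.mem_erase.mp hm').1
    have hkj : k ≠ j := (Finset.mem_erase.mp hk).1
    have e1 : (a j - a m)/2 = (a j - a k)/2 + (a k - a m)/2 := by ring
    have e2 : (a m - a k)/2 = -((a k - a m)/2) := by ring
    simp only [ctf, snf]
    rw [e1, e2, Complex.cos_neg, Complex.sin_neg, div_neg, sub_neg_eq_add]
    exact trig_id _ _ (hs j k hkj.symm) (hs k m hmk.symm) (by rw [← e1]; exact hs j m hmj.symm)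
  have key : ∑ k ∈ Finset.univ.erase j, ((Ga a j - Ga a k)/2)/(snf a j k)^2
      = (1/(4*(N:ℂ))) * (∑ k ∈ Finset.univ.erase j,
            (-2) * (Complex.cos ((a j - a k)/2) / (snf a j k)^3))
        - (1/(4*(N:ℂ))) * (∑ k ∈ Finset.univ.erase j,
            ∑ m ∈ (Finset.univ.erase j).erase k, (ctf a j m - ctf a k m)/(snf a j k)^2) := by
    rw [Finset.mul_sum, Finset.mul_sum, ← Finset.sum_sub_distrib]
    refine Finset.sum_congr rfl fun k hk => ?_
    rw [step1 k hk, ← Finset.sum_div]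
    simp only [ctf]
    ring
  rw [key, hzero, ← Finset.mul_sum]
  field_simp
  ring

lemma hasDerivAt_w {N : ℕ} (U : Set ℂ) (hU : IsOpen U) (w : Fin N → ℂ → ℂ)
    (hdiff : ∀ j, DifferentiableOn ℂ (w j) U)
    (hdist : ∀ τ ∈ U, ∀ j k : Fin N, j ≠ k →
      Complex.exp (Complex.I * w j τ) ≠ Complex.exp (Complex.I * w k τ))
    (hode : ∀ j : Fin N, ∀ τ ∈ U,
      HasDerivAt (fun σ => Complex.exp (Complex.I * w j σ))
        (Complex.exp (Complex.I * w j τ) * ((1 / (2 * (N : ℂ))) *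
          (1 + ∑ k ∈ Finset.univ.erase j,
            (Complex.exp (Complex.I * w j τ) + Complex.exp (Complex.I * w k τ)) /
              (Complex.exp (Complex.I * w j τ) - Complex.exp (Complex.I * w k τ))))) τ)
    (k : Fin N) (σ : ℂ) (hσ : σ ∈ U) :
    HasDerivAt (w k) (Ga (fun m => w m σ) k) σ := by
  have hd : DifferentiableAt ℂ (w k) σ := (hdiff k).differentiableAt (hU.mem_nhds hσ)
  have h1 : HasDerivAt (w k) (deriv (w k) σ) σ := hd.hasDerivAt
  have h2 : HasDerivAt (fun t => Complex.exp (Complex.I * w k t))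
      (Complex.exp (Complex.I * w k σ) * (Complex.I * deriv (w k) σ)) σ :=
    (h1.const_mul Complex.I).cexp
  have huniq := h2.unique (hode k σ hσ)
  have hexp : Complex.exp (Complex.I * w k σ) ≠ 0 := Complex.exp_ne_zero _
  have hId := mul_left_cancel₀ hexp huniq
  have hd' : deriv (w k) σ = -Complex.I * ((1 / (2 * (N : ℂ))) *
      (1 + ∑ m ∈ Finset.univ.erase k,
        (Complex.exp (Complex.I * w k σ) + Complex.exp (Complex.I * w m σ)) /
          (Complex.exp (Complex.I * w k σ) - Complex.exp (Complex.I * w m σ)))) := by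
    linear_combination (-Complex.I) * hId + (deriv (w k) σ) * Complex.I_sq
  have hval : Ga (fun m => w m σ) k = -Complex.I * ((1 / (2 * (N : ℂ))) *
      (1 + ∑ m ∈ Finset.univ.erase k,
        (Complex.exp (Complex.I * w k σ) + Complex.exp (Complex.I * w m σ)) /
          (Complex.exp (Complex.I * w k σ) - Complex.exp (Complex.I * w m σ)))) := by
    have hsum : ∑ m ∈ Finset.univ.erase k,
        (Complex.exp (Complex.I * w k σ) + Complex.exp (Complex.I * w m σ)) /
          (Complex.exp (Complex.I * w k σ) - Complex.exp (Complex.I * w m σ))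
        = ∑ m ∈ Finset.univ.erase k, (-Complex.I * ctf (fun m => w m σ) k m) := by
      refine Finset.sum_congr rfl fun m hm => ?_
      have hmk : m ≠ k := (Finset.mem_erase.mp hm).1
      simp only [ctf, snf]
      exact exp_ratio _ _ (hdist σ hσ k m hmk.symm)
    rw [hsum, ← Finset.mul_sum]
    simp only [Ga]
    linear_combination (-(1 / (2 * (N:ℂ))) * ∑ m ∈ Finset.univ.erase k, ctf (fun m => w m σ) k m) * Complex.I_sq
  rw [hval, ← hd']
  exact h1


theorem stmt7 (N : ℕ) (hN : 0 < N) (U : Set ℂ) (hU : IsOpen U)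
    (w : Fin N → ℂ → ℂ)
    (hdiff : ∀ j, DifferentiableOn ℂ (w j) U)
    (hdist : ∀ τ ∈ U, ∀ j k : Fin N, j ≠ k →
      Complex.exp (Complex.I * w j τ) ≠ Complex.exp (Complex.I * w k τ))
    (hode : ∀ j : Fin N, ∀ τ ∈ U,
      HasDerivAt (fun σ => Complex.exp (Complex.I * w j σ))
        (Complex.exp (Complex.I * w j τ) * ((1 / (2 * (N : ℂ))) *
          (1 + ∑ k ∈ Finset.univ.erase j,
            (Complex.exp (Complex.I * w j τ) + Complex.exp (Complex.I * w k τ)) /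
              (Complex.exp (Complex.I * w j τ) - Complex.exp (Complex.I * w k τ))))) τ)
    (j : Fin N) (τ : ℂ) (hτ : τ ∈ U) :
    HasDerivAt (deriv (w j))
      (-(1 / (4 * (N : ℂ) ^ 2)) * ∑ k ∈ Finset.univ.erase j,
        Complex.cos ((w j τ - w k τ) / 2) / Complex.sin ((w j τ - w k τ) / 2) ^ 3) τ := by
  have hw : ∀ k : Fin N, ∀ σ ∈ U, HasDerivAt (w k) (Ga (fun m => w m σ) k) σ :=
    fun k σ hσ => hasDerivAt_w U hU w hdiff hdist hode k σ hσ
  -- derivative of the right-hand side function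
  have hterm : ∀ k ∈ Finset.univ.erase j, HasDerivAt
      (fun σ => Complex.cos ((w j σ - w k σ)/2) / Complex.sin ((w j σ - w k σ)/2))
      (-(((Ga (fun m => w m τ) j - Ga (fun m => w m τ) k)/2)
          / (Complex.sin ((w j τ - w k τ)/2))^2)) τ := by
    intro k hk
    have hkj : k ≠ j := (Finset.mem_erase.mp hk).1
    have hsne : Complex.sin ((w j τ - w k τ)/2) ≠ 0 :=
      sin_half_ne _ _ (hdist τ hτ j k hkj.symm)
    have hu : HasDerivAt (fun σ => (w j σ - w k σ)/2)
        ((Ga (fun m => w m τ) j - Ga (fun m => w m τ) k)/2) τ :=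
      (((hw j τ hτ).sub (hw k τ hτ)).div_const 2)
    have hq := (hu.ccos).fun_div (hu.csin) hsne
    refine hq.congr_deriv (Eq.symm ?_)
    have hpy := Complex.sin_sq_add_cos_sq ((w j τ - w k τ)/2)
    rw [← neg_div]
    congr 1
    linear_combination ((Ga (fun m => w m τ) j - Ga (fun m => w m τ) k)/2) * hpy
  have hsum := HasDerivAt.fun_sum hterm
  have hfull := (hsum.const_sub (-Complex.I)).const_mul (1/(2*(N:ℂ)))
  have hfun : (fun σ => Ga (fun m => w m σ) j)
      = (fun y => 1/(2*(N:ℂ)) * (-Complex.I - ∑ i ∈ Finset.univ.erase j,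
          Complex.cos ((w j y - w i y) / 2) / Complex.sin ((w j y - w i y) / 2))) := by
    funext σ
    simp only [Ga, ctf, snf]
  rw [← hfun] at hfull
  rw [Finset.sum_neg_distrib, neg_neg] at hfull
  have hG := hfull
  have hev : deriv (w j) =ᶠ[nhds τ] (fun σ => Ga (fun m => w m σ) j) := by
    filter_upwards [hU.mem_nhds hτ] with σ hσ
    exact (hw j σ hσ).deriv
  have final := hG.congr_of_eventuallyEq hev
  have halg := key_alg N hN (fun m => w m τ)
    (fun k l hkl => sin_half_ne _ _ (hdist τ hτ k l hkl)) j
  simp only [snf] at halg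
  rwa [halg] at final
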